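/- arXiv:0801.1462 — 2 statements merged into one kernel-verified Lean document; each statement's English description precedes it below -/
import Mathlib

section
/- Let R be a ring, F a class of left R-modules defining a homological dimension, closed under finite direct sums, and such that the class of homomorphic images of modules in F is closed under extensions. For a short exact sequence 0 → A → B → C → 0: if A and C have F-dimension ≤ i + 1, then B has F-dimension ≤ i + 1. -/
open CategoryTheory

universe u

noncomputable section

variable {R : Type u} [Ring R]

/-- Membership in `F ∪ {0}`. -/
def MemF0 (F : ModuleCat.{u} R → Prop) (M : ModuleCat.{u} R) : Prop :=
  F M ∨ Subsingleton M

/-- There is a short exact sequence `0 → A → B → C → 0`. -/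
def IsSES {R : Type u} [Ring R] (A B C : ModuleCat.{u} R) : Prop :=
  ∃ (f : A ⟶ B) (g : B ⟶ C),
    Function.Injective f ∧ Function.Surjective g ∧ Function.Exact f g

/-- `FDimLE F n M` : `M` has left `F`-dimension `≤ n`, i.e. there is an exact sequence
`0 → F_n → ⋯ → F_0 → M → 0` with all `F_j ∈ F ∪ {0}`. -/
def FDimLE (F : ModuleCat.{u} R → Prop) : ℕ → ModuleCat.{u} R → Prop
  | 0, M => MemF0 F M
  | n + 1, M => ∃ K F0 : ModuleCat.{u} R, MemF0 F F0 ∧ IsSES K F0 M ∧ FDimLE F n K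

/-- `M` admits a (possibly infinite) `F`-resolution `⋯ → F_1 → F_0 → M → 0`
with all terms in `F ∪ {0}`. -/
def HasFRes (F : ModuleCat.{u} R → Prop) (M : ModuleCat.{u} R) : Prop :=
  ∃ K Fo : ℕ → ModuleCat.{u} R, K 0 = M ∧
    ∀ n, MemF0 F (Fo n) ∧ IsSES (K (n + 1)) (Fo n) (K n)

/-- `IsFKernel F n K X` : there is an exact sequence
`0 → K → F_n → ⋯ → F_0 → X → 0` with all `F_i ∈ F`. -/
def IsFKernel (F : ModuleCat.{u} R → Prop) : ℕ → ModuleCat.{u} R → ModuleCat.{u} R → Prop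
  | 0, K, X => ∃ F0, F F0 ∧ IsSES K F0 X
  | n + 1, K, X => ∃ K1 F0, F F0 ∧ IsSES K1 F0 X ∧ IsFKernel F n K K1

/-- The class `F` defines a homological dimension. -/
def DefinesHomDim (F : ModuleCat.{u} R → Prop) : Prop :=
  (∀ K Fm M : ModuleCat.{u} R, F Fm → IsSES K Fm M → HasFRes F M → HasFRes F K) ∧
  (∀ (n : ℕ) (K X : ModuleCat.{u} R), FDimLE F (n + 1) X → IsFKernel F n K X → F K)

/-- `M` is a homomorphic image of a module in `F`. -/
def IsImageOfF (F : ModuleCat.{u} R → Prop) (M : ModuleCat.{u} R) : Prop :=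
  ∃ F0 : ModuleCat.{u} R, F F0 ∧ ∃ g : F0 ⟶ M, Function.Surjective g

/-- `F` is closed under finite (binary) direct sums. -/
def ClosedUnderFinSums (F : ModuleCat.{u} R → Prop) : Prop :=
  ∀ A B : ModuleCat.{u} R, F A → F B → F (ModuleCat.of R (A × B))

/-- The class of homomorphic images of modules in `F` is closed under extensions. -/
def ImagesClosedUnderExt (F : ModuleCat.{u} R → Prop) : Prop :=
  ∀ (A B C : ModuleCat.{u} R) (f : A ⟶ B) (g : B ⟶ C),
    Function.Injective f → Function.Surjective g → Function.Exact f g →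
      IsImageOfF F A → IsImageOfF F C → IsImageOfF F B

/-- `Ext^i(M, N)` vanishes. -/
def ExtZero {R : Type u} [Ring R] (i : ℕ) (M N : ModuleCat.{u} R) : Prop :=
  Subsingleton (((Ext ℤ (ModuleCat.{u} R) i).obj (Opposite.op M)).obj N)

end
noncomputable section Aux

open Function

variable {R : Type u} [Ring R] {F : ModuleCat.{u} R → Prop}

/-- The zero module. -/
def ZeroMod (R : Type u) [Ring R] : ModuleCat.{u} R := ModuleCat.of R PUnit.{u+1}

instance : Subsingleton (ZeroMod R) := inferInstanceAs (Subsingleton PUnit)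

lemma subsingleton_of_surj {A B : ModuleCat.{u} R} (f : A ⟶ B) (hf : Function.Surjective f)
    (h : Subsingleton A) : Subsingleton B := by
  constructor
  intro a b
  obtain ⟨x, rfl⟩ := hf a
  obtain ⟨y, rfl⟩ := hf b
  rw [Subsingleton.elim x y]

/-- trivial SES `0 → M → M → 0` realized as `IsSES M M M` for subsingleton `M`. -/
lemma ses_triv (M : ModuleCat.{u} R) (h : Subsingleton M) : IsSES M M M := by
  refine ⟨𝟙 M, 𝟙 M, fun a b _ => Subsingleton.elim a b, fun x => ⟨x, rfl⟩, fun y => ?_⟩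
  simp only [Set.mem_range]
  exact ⟨fun _ => ⟨y, rfl⟩, fun _ => Subsingleton.elim _ _⟩

/-- L1 : subsingleton modules have `F`-dimension `≤ n` for every `n`. -/
lemma fdimle_of_subsingleton : ∀ (n : ℕ) (M : ModuleCat.{u} R), Subsingleton M → FDimLE F n M
  | 0, _, h => Or.inr h
  | n + 1, M, h => ⟨M, M, Or.inr h, ses_triv M h, fdimle_of_subsingleton n M h⟩

/-- SES `0 → M → M → 0` at the other end: `IsSES 0 M M`. -/
lemma ses_id (M : ModuleCat.{u} R) : IsSES (ZeroMod R) M M := by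
  refine ⟨0, 𝟙 M, fun a b _ => Subsingleton.elim a b, fun x => ⟨x, rfl⟩, fun y => ?_⟩
  constructor
  · intro hy
    exact ⟨0, by simpa using hy.symm⟩
  · rintro ⟨x, rfl⟩
    rfl

/-- if `F G` then `FDimLE F 1 G`. -/
lemma fdimle_one_of_mem (G' : ModuleCat.{u} R) (hG : F G') : FDimLE F 1 G' := by
  exact ⟨ZeroMod R, G', Or.inl hG, ses_id G', Or.inr inferInstance⟩

/-- transport of dimension along an isomorphism. -/
lemma fdimle_of_iso (n : ℕ) (L K : ModuleCat.{u} R) (w : L ⟶ K) (hw : Function.Bijective w)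
    (h : FDimLE F (n + 1) L) : FDimLE F (n + 1) K := by
  obtain ⟨K', F0, h0, ⟨s, q, hs, hq, hex⟩, hd⟩ := h
  refine ⟨K', F0, h0, ⟨s, q ≫ w, hs, hw.surjective.comp hq, fun y => ?_⟩, hd⟩
  show w (q y) = 0 ↔ _
  rw [← map_zero (ConcreteCategory.hom w), hw.injective.eq_iff]
  exact hex y

lemma exact_ker_subtype {A B : ModuleCat.{u} R} (p : A ⟶ B) :
    Function.Exact ((LinearMap.ker p.hom).subtype) p := by
  intro y
  constructor
  · intro hy
    exact ⟨⟨y, hy⟩, rfl⟩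
  · rintro ⟨⟨x, hx⟩, rfl⟩
    exact hx

/-- the kernel SES of a surjection. -/
lemma ses_ker {A B : ModuleCat.{u} R} (p : A ⟶ B) (hp : Function.Surjective p) :
    IsSES (ModuleCat.of R (LinearMap.ker p.hom)) A B :=
  ⟨ModuleCat.ofHom (LinearMap.ker p.hom).subtype, p, Submodule.injective_subtype _, hp, exact_ker_subtype p⟩

/-- CONS: given a SES `0 → A → B → C → 0` and a SES `0 → Kp → Fb → B → 0`,
there is `P` (the preimage of `A` in `Fb`) with SES's `0 → P → Fb → C → 0`
and `0 → Kp → P → A → 0`. -/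
lemma cons {A B C Kp Fb : ModuleCat.{u} R} (f : A ⟶ B) (g : B ⟶ C)
    (hfinj : Function.Injective f) (hgsurj : Function.Surjective g)
    (hfg : Function.Exact f g)
    (s : Kp ⟶ Fb) (p : Fb ⟶ B) (hsinj : Function.Injective s)
    (hpsurj : Function.Surjective p) (hsp : Function.Exact s p) :
    ∃ P : ModuleCat.{u} R, IsSES P Fb C ∧ IsSES Kp P A := by
  refine ⟨ModuleCat.of R (LinearMap.ker (p ≫ g).hom), ses_ker (p ≫ g) (hgsurj.comp hpsurj), ?_⟩
  -- the map Kp ⟶ P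
  have hmem : ∀ k : Kp, s k ∈ LinearMap.ker (p ≫ g).hom := by
    intro k
    have hp0 : p (s k) = 0 := (hsp (s k)).mpr ⟨k, rfl⟩
    show g (p (s k)) = 0
    rw [hp0, map_zero]
  set s' : Kp →ₗ[R] LinearMap.ker (p ≫ g).hom :=
    LinearMap.codRestrict (LinearMap.ker (p ≫ g).hom) s.hom hmem with hs'
  -- the map P ⟶ A
  have hrange : ∀ x : LinearMap.ker (p ≫ g).hom, p x.1 ∈ LinearMap.range f.hom := by
    intro x
    have := (hfg (p x.1)).mp x.2
    obtain ⟨a, ha⟩ := this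
    exact ⟨a, ha⟩
  set eA := LinearEquiv.ofInjective f.hom hfinj with heA
  set c : LinearMap.ker (p ≫ g).hom →ₗ[R] LinearMap.range f.hom :=
    LinearMap.codRestrict (LinearMap.range f.hom)
      (p.hom.comp (LinearMap.ker (p ≫ g).hom).subtype) hrange with hc
  set tA : LinearMap.ker (p ≫ g).hom →ₗ[R] A := (eA.symm.toLinearMap).comp c with htA
  have hcapp : ∀ x : LinearMap.ker (p ≫ g).hom, (c x : B) = p x.1 := fun x => rfl
  refine ⟨ModuleCat.ofHom s', ModuleCat.ofHom tA, ?_, ?_, ?_⟩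
  · -- injective
    intro a b hab
    exact hsinj (congrArg Subtype.val hab)
  · -- surjective
    intro a
    obtain ⟨y, hy⟩ := hpsurj (f a)
    have hmemy : y ∈ LinearMap.ker (p ≫ g).hom := by
      show g (p y) = 0
      rw [hy]
      exact (hfg (f a)).mpr ⟨a, rfl⟩
    refine ⟨⟨y, hmemy⟩, ?_⟩
    have h1 : c ⟨y, hmemy⟩ = eA a := by
      apply Subtype.ext
      rw [hcapp]
      simp only [heA]
      rw [LinearEquiv.ofInjective_apply]
      exact hy
    show eA.symm (c ⟨y, hmemy⟩) = a
    rw [h1, LinearEquiv.symm_apply_apply]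
  · -- exact
    intro x
    show eA.symm (c x) = 0 ↔ _
    rw [LinearEquiv.map_eq_zero_iff]
    have h2 : c x = 0 ↔ p x.1 = 0 := by
      constructor
      · intro h
        have := congrArg (Subtype.val) h
        rw [hcapp] at this
        exact this
      · intro h
        apply Subtype.ext
        rw [hcapp]
        exact h
    rw [h2, hsp x.1]
    constructor
    · rintro ⟨k, hk⟩
      exact ⟨k, Subtype.ext hk⟩
    · rintro ⟨k, rfl⟩
      exact ⟨k, rfl⟩

/-- PULL: pullback of a SES `0 → K → L → A → 0` along a cover `q : Fa ↠ A`
with kernel `Ka`: there is `D` with SES's `0 → Ka → D → L → 0` and `0 → K → D → Fa → 0`. -/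
lemma pull {K L A Ka Fa : ModuleCat.{u} R} (u : K ⟶ L) (v : L ⟶ A)
    (hu : Function.Injective u) (hv : Function.Surjective v) (huv : Function.Exact u v)
    (s : Ka ⟶ Fa) (q : Fa ⟶ A) (hs : Function.Injective s)
    (hq : Function.Surjective q) (hsq : Function.Exact s q) :
    ∃ D : ModuleCat.{u} R, IsSES Ka D L ∧ IsSES K D Fa := by
  set φ : (L × Fa : Type u) →ₗ[R] A :=
    v.hom.comp (LinearMap.fst R L Fa) - q.hom.comp (LinearMap.snd R L Fa)
      with hφ
  have hφapp : ∀ x : (L × Fa : Type u), φ x = v x.1 - q x.2 := fun x => rfl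
  refine ⟨ModuleCat.of R (LinearMap.ker φ), ?_, ?_⟩
  · -- SES Ka D L
    have hmem : ∀ a : Ka, ((0 : L), s a) ∈ LinearMap.ker φ := by
      intro a
      show φ (0, s a) = 0
      rw [hφapp]
      have : q (s a) = 0 := (hsq (s a)).mpr ⟨a, rfl⟩
      simp [this]
    set jKa : Ka →ₗ[R] LinearMap.ker φ :=
      LinearMap.codRestrict _ (LinearMap.prod (0 : Ka →ₗ[R] L) s.hom)
        (fun a => hmem a) with hj
    set π1 : LinearMap.ker φ →ₗ[R] L := (LinearMap.fst R L Fa).comp (LinearMap.ker φ).subtype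
    refine ⟨ModuleCat.ofHom jKa, ModuleCat.ofHom π1, ?_, ?_, ?_⟩
    · intro a b hab
      apply hs
      exact congrArg (fun z => (Subtype.val z).2) hab
    · intro l
      obtain ⟨x, hx⟩ := hq (v l)
      refine ⟨⟨(l, x), ?_⟩, rfl⟩
      show φ (l, x) = 0
      rw [hφapp, hx]
      simp
    · intro d
      constructor
      · intro hd
        have hd1 : (d.1).1 = 0 := hd
        have hker : φ d.1 = 0 := d.2
        rw [hφapp, hd1, map_zero] at hker
        have : q (d.1).2 = 0 := by
          have := hker
          simp only [zero_sub, neg_eq_zero] at this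
          exact this
        obtain ⟨a, ha⟩ := (hsq _).mp this
        refine ⟨a, ?_⟩
        apply Subtype.ext
        apply Prod.ext
        · exact hd1.symm
        · exact ha
      · rintro ⟨a, rfl⟩
        show ((0 : L), s a).1 = 0
        rfl
  · -- SES K D Fa
    have hmem : ∀ k : K, ((u k : L), (0 : Fa)) ∈ LinearMap.ker φ := by
      intro k
      show φ (u k, 0) = 0
      rw [hφapp]
      have : v (u k) = 0 := (huv (u k)).mpr ⟨k, rfl⟩
      simp [this]
    set jK : K →ₗ[R] LinearMap.ker φ :=
      LinearMap.codRestrict _ (LinearMap.prod u.hom (0 : K →ₗ[R] Fa))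
        (fun k => hmem k) with hjk
    set π2 : LinearMap.ker φ →ₗ[R] Fa := (LinearMap.snd R L Fa).comp (LinearMap.ker φ).subtype
    refine ⟨ModuleCat.ofHom jK, ModuleCat.ofHom π2, ?_, ?_, ?_⟩
    · intro a b hab
      apply hu
      exact congrArg (fun z => (Subtype.val z).1) hab
    · intro x
      obtain ⟨l, hl⟩ := hv (q x)
      refine ⟨⟨(l, x), ?_⟩, rfl⟩
      show φ (l, x) = 0
      rw [hφapp, hl]
      simp
    · intro d
      constructor
      · intro hd
        have hd2 : (d.1).2 = 0 := hd
        have hker : φ d.1 = 0 := d.2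
        rw [hφapp, hd2, map_zero] at hker
        have : v (d.1).1 = 0 := by simpa using hker
        obtain ⟨k, hk⟩ := (huv _).mp this
        refine ⟨k, ?_⟩
        apply Subtype.ext
        apply Prod.ext
        · exact hk
        · exact hd2.symm
      · rintro ⟨k, rfl⟩
        rfl
/-- If all the `Fo m`, `m ≤ n`, are genuinely in `F`, then the `(n+1)`-st kernel of a
resolution is an `F`-kernel. -/
lemma fk (F : ModuleCat.{u} R → Prop) :
    ∀ (n : ℕ) (Kr Fo : ℕ → ModuleCat.{u} R),
    (∀ m, IsSES (Kr (m + 1)) (Fo m) (Kr m)) → (∀ m, m ≤ n → F (Fo m)) →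
    IsFKernel F n (Kr (n + 1)) (Kr 0)
  | 0, Kr, Fo, hres, hf => ⟨Fo 0, hf 0 (le_refl _), hres 0⟩
  | n + 1, Kr, Fo, hres, hf =>
    ⟨Kr 1, Fo 0, hf 0 (Nat.zero_le _), hres 0,
      fk F n (fun m => Kr (m + 1)) (fun m => Fo (m + 1)) (fun m => hres (m + 1))
        (fun m hm => hf (m + 1) (Nat.succ_le_succ hm))⟩

/-- Climb up a resolution: a dimension bound on the `j`-th kernel gives one on the module. -/
lemma up : ∀ (j m : ℕ) (Kr Fo : ℕ → ModuleCat.{u} R),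
    (∀ m', MemF0 F (Fo m')) → (∀ m', IsSES (Kr (m' + 1)) (Fo m') (Kr m')) →
    FDimLE F m (Kr j) → FDimLE F (m + j) (Kr 0) := by
  intro j
  induction j with
  | zero => intro m Kr Fo _ _ h; simpa using h
  | succ j ih =>
    intro m Kr Fo hm0 hres h
    have h1 : FDimLE F (m + 1) (Kr j) := ⟨Kr (j + 1), Fo j, hm0 j, hres j, h⟩
    have h2 := ih (m + 1) Kr Fo hm0 hres h1
    have : m + 1 + j = m + (j + 1) := by omega
    rwa [this] at h2

/-- L3: a finite resolution can be padded to an infinite one. -/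
lemma hasFRes_of_fdimle : ∀ (n : ℕ) (M : ModuleCat.{u} R), FDimLE F n M → HasFRes F M := by
  intro n
  induction n with
  | zero =>
    intro M h
    refine ⟨fun m => match m with | 0 => M | _ + 1 => ZeroMod R,
            fun m => match m with | 0 => M | _ + 1 => ZeroMod R, rfl, ?_⟩
    intro m
    match m with
    | 0 => exact ⟨h, ses_id M⟩
    | m + 1 => exact ⟨Or.inr inferInstance, ses_triv (ZeroMod R) inferInstance⟩
  | succ n ih =>
    intro M h
    obtain ⟨K, F0, hF0, hses, hd⟩ := h
    obtain ⟨Kr, Fo, hK0, hres⟩ := ih K hd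
    refine ⟨fun m => match m with | 0 => M | m + 1 => Kr m,
            fun m => match m with | 0 => F0 | m + 1 => Fo m, rfl, ?_⟩
    intro m
    match m with
    | 0 => exact ⟨hF0, by show IsSES (Kr 0) F0 M; rw [hK0]; exact hses⟩
    | m + 1 => exact hres m

/-- L2 (syzygy lemma): the kernel of an `F`-cover of a module of dimension `≤ n+1`
has dimension `≤ n`. -/
lemma syzygy (hF : DefinesHomDim F) (n : ℕ) (X K F0 : ModuleCat.{u} R)
    (hX : FDimLE F (n + 1) X) (hF0 : F F0) (hses : IsSES K F0 X) : FDimLE F n K := by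
  obtain ⟨Kr, Fo, hK0, hres⟩ :=
    hF.1 K F0 X hF0 hses (hasFRes_of_fdimle (n + 1) X hX)
  by_cases hc : ∀ m, m < n → F (Fo m)
  · -- all covers genuine: use hF.2
    have hker : IsFKernel F n (Kr n) X := by
      have := fk F n
        (fun m => match m with | 0 => X | m + 1 => Kr m)
        (fun m => match m with | 0 => F0 | m + 1 => Fo m)
        (fun m => match m with
          | 0 => by show IsSES (Kr 0) F0 X; rw [hK0]; exact hses
          | m + 1 => (hres m).2)
        (fun m hm => match m, hm with
          | 0, _ => hF0
          | m + 1, hm => hc m (by omega))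
      exact this
    have hFK : F (Kr n) := hF.2 n (Kr n) X hX hker
    have := up n 0 Kr Fo (fun m' => (hres m').1) (fun m' => (hres m').2) (Or.inl hFK)
    rw [Nat.zero_add] at this
    rwa [hK0] at this
  · push_neg at hc
    obtain ⟨m, hm, hnF⟩ := hc
    have hsub : Subsingleton (Fo m) := by
      rcases (hres m).1 with h | h
      · exact absurd h hnF
      · exact h
    have hsubK : Subsingleton (Kr (m + 1)) := by
      obtain ⟨a, b, hainj, _, _⟩ := (hres m).2
      exact hainj.subsingleton
    have h1 : FDimLE F (n - (m + 1)) (Kr (m + 1)) :=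
      fdimle_of_subsingleton _ _ hsubK
    have h2 := up (m + 1) (n - (m + 1)) Kr Fo (fun m' => (hres m').1)
      (fun m' => (hres m').2) h1
    have : n - (m + 1) + (m + 1) = n := by omega
    rw [this] at h2
    rwa [hK0] at h2
/-- Q_F: in a SES `0 → K → D → G → 0` with `G ∈ F` and `dim D ≤ m+1`, also `dim K ≤ m+1`. -/
lemma qf (hF : DefinesHomDim F) (m : ℕ) (K D G : ModuleCat.{u} R) (hG : F G)
    (w : K ⟶ D) (z : D ⟶ G) (hw : Function.Injective w) (hz : Function.Surjective z)
    (hwz : Function.Exact w z) (hD : FDimLE F (m + 1) D) : FDimLE F (m + 1) K := by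
  obtain ⟨Kd, Fd, hFd, ⟨s, t, hs, ht, hst⟩, hKd⟩ := hD
  rcases hFd with hFd | hFd
  · -- genuine cover of D
    obtain ⟨P, sesPFdG, sesKdPK⟩ := cons w z hw hz hwz s t hs ht hst
    have hG1 : FDimLE F 1 G := fdimle_one_of_mem G hG
    have hP0 : FDimLE F 0 P := syzygy hF 0 G P Fd hG1 hFd sesPFdG
    rcases hP0 with hP | hP
    · exact ⟨Kd, P, Or.inl hP, sesKdPK, hKd⟩
    · obtain ⟨a, b, _, hbsurj, _⟩ := sesKdPK
      have : Subsingleton K := subsingleton_of_surj b hbsurj hP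
      exact fdimle_of_subsingleton _ _ this
  · -- Fd subsingleton ⇒ D, K subsingleton
    have hDsub : Subsingleton D := subsingleton_of_surj t ht hFd
    have : Subsingleton K := hw.subsingleton
    exact fdimle_of_subsingleton _ _ this

/-- T: assuming Q at level n, extension closure of `FDimLE F (n+1)`. -/
lemma tof (hF : DefinesHomDim F) (himg : ImagesClosedUnderExt F) (n : ℕ)
    (hQ : ∀ (K L A' : ModuleCat.{u} R) (u : K ⟶ L) (v : L ⟶ A'),
      Function.Injective u → Function.Surjective v → Function.Exact u v →
      FDimLE F n L → FDimLE F (n + 1) A' → FDimLE F n K)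
    (A B C : ModuleCat.{u} R) (f : A ⟶ B) (g : B ⟶ C)
    (hinj : Function.Injective f) (hsurj : Function.Surjective g)
    (hex : Function.Exact f g)
    (hA : FDimLE F (n + 1) A) (hC : FDimLE F (n + 1) C) : FDimLE F (n + 1) B := by
  obtain ⟨Ka, Fa, hFa, ⟨sa, qa, hsa, hqa, hexa⟩, hKa⟩ := hA
  obtain ⟨Kc, Fc, hFc, ⟨sc, qc, hsc, hqc, hexc⟩, hKc⟩ := hC
  rcases hFa with hFa | hFa
  · rcases hFc with hFc | hFc
    · -- main case: both genuine
      have imgA : IsImageOfF F A := ⟨Fa, hFa, qa, hqa⟩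
      have imgC : IsImageOfF F C := ⟨Fc, hFc, qc, hqc⟩
      obtain ⟨Fb, hFb, p, hp⟩ := himg A B C f g hinj hsurj hex imgA imgC
      obtain ⟨P, sesPFbC, sesKbPA⟩ := cons (Kp := ModuleCat.of R (LinearMap.ker p.hom)) f g hinj hsurj hex
        (ModuleCat.ofHom (LinearMap.ker p.hom).subtype) p (Submodule.injective_subtype _) hp
        (exact_ker_subtype p)
      have hP : FDimLE F n P :=
        syzygy hF n C P Fb ⟨Kc, Fc, Or.inl hFc, ⟨sc, qc, hsc, hqc, hexc⟩, hKc⟩ hFb sesPFbC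
      obtain ⟨u', v', hu', hv', hex'⟩ := sesKbPA
      have hKB : FDimLE F n (ModuleCat.of R (LinearMap.ker p.hom)) :=
        hQ _ P A u' v' hu' hv' hex' hP ⟨Ka, Fa, Or.inl hFa, ⟨sa, qa, hsa, hqa, hexa⟩, hKa⟩
      exact ⟨ModuleCat.of R (LinearMap.ker p.hom), Fb, Or.inl hFb, ses_ker p hp, hKB⟩
    · -- C subsingleton ⇒ f bijective
      have hCsub : Subsingleton C := subsingleton_of_surj qc hqc hFc
      have hfsurj : Function.Surjective f := by
        intro b
        have : g b = 0 := Subsingleton.elim _ _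
        exact (hex b).mp this
      exact fdimle_of_iso n A B f ⟨hinj, hfsurj⟩
        ⟨Ka, Fa, Or.inl hFa, ⟨sa, qa, hsa, hqa, hexa⟩, hKa⟩
  · -- A subsingleton ⇒ g bijective
    have hAsub : Subsingleton A := subsingleton_of_surj qa hqa hFa
    have hginj : Function.Injective g := by
      rw [injective_iff_map_eq_zero]
      intro x hx
      obtain ⟨a, rfl⟩ := (hex x).mp hx
      rw [Subsingleton.elim a 0, map_zero]
    have hbij : Function.Bijective g := ⟨hginj, hsurj⟩
    set w : C ⟶ B := ModuleCat.ofHom (LinearEquiv.ofBijective g.hom hbij).symm.toLinearMap with hw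
    have hwbij : Function.Bijective w :=
      (LinearEquiv.ofBijective g.hom hbij).symm.bijective
    exact fdimle_of_iso n C B w hwbij
      ⟨Kc, Fc, hFc, ⟨sc, qc, hsc, hqc, hexc⟩, hKc⟩

/-- Q: in a SES `0 → K → L → A → 0`, `dim L ≤ n` and `dim A ≤ n+1` give `dim K ≤ n`. -/
lemma qlem (hF : DefinesHomDim F) (himg : ImagesClosedUnderExt F) :
    ∀ (n : ℕ) (K L A : ModuleCat.{u} R) (u : K ⟶ L) (v : L ⟶ A),
      Function.Injective u → Function.Surjective v → Function.Exact u v →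
      FDimLE F n L → FDimLE F (n + 1) A → FDimLE F n K := by
  intro n
  induction n with
  | zero =>
    intro K L A u v hu hv huv hL hA
    rcases hL with hFL | hFL
    · exact Or.inl (hF.2 0 K A hA ⟨L, hFL, u, v, hu, hv, huv⟩)
    · exact Or.inr hu.subsingleton
  | succ n ih =>
    intro K L A u v hu hv huv hL hA
    obtain ⟨Ka, Fa, hFa, ⟨s, q, hs, hq, hsq⟩, hKa⟩ := hA
    rcases hFa with hFa | hFa
    · -- genuine cover of A: pullback
      obtain ⟨D, sesKaDL, sesKDFa⟩ := pull u v hu hv huv s q hs hq hsq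
      obtain ⟨a1, a2, a3, a4, a5⟩ := sesKaDL
      have hD : FDimLE F (n + 1) D :=
        tof hF himg n ih Ka D L a1 a2 a3 a4 a5 hKa hL
      obtain ⟨b1, b2, b3, b4, b5⟩ := sesKDFa
      exact qf hF n K D Fa hFa b1 b2 b3 b4 b5 hD
    · -- Fa subsingleton ⇒ A subsingleton ⇒ u bijective
      have hAsub : Subsingleton A := subsingleton_of_surj q hq hFa
      have husurj : Function.Surjective u := by
        intro l
        have : v l = 0 := Subsingleton.elim _ _
        exact (huv l).mp this
      set w : L ⟶ K := ModuleCat.ofHom (LinearEquiv.ofBijective u.hom ⟨hu, husurj⟩).symm.toLinearMap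
      have hwbij : Function.Bijective w :=
        (LinearEquiv.ofBijective u.hom ⟨hu, husurj⟩).symm.bijective
      exact fdimle_of_iso n L K w hwbij hL
end Aux
theorem stmt6 {R : Type u} [Ring R] (F : ModuleCat.{u} R → Prop)
    (hF : DefinesHomDim F) (hsum : ClosedUnderFinSums F)
    (himg : ImagesClosedUnderExt F)
    (A B C : ModuleCat.{u} R) (f : A ⟶ B) (g : B ⟶ C)
    (hinj : Function.Injective f) (hsurj : Function.Surjective g)
    (hex : Function.Exact f g) (i : ℕ)
    (hA : FDimLE F (i + 1) A) (hC : FDimLE F (i + 1) C) :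
    FDimLE F (i + 1) B :=
  tof hF himg i (qlem hF himg i) A B C f g hinj hsurj hex hA hC
end

section
/- Let R be a ring and suppose (A, B) is a cotorsion pair such that A defines a homological dimension. Then the cotorsion pair is hereditary, i.e., Ext^i_R(A, B) = 0 for all i ≥ 1, A ∈ A, B ∈ B. -/
open CategoryTheory

universe u

noncomputable section DimShiftAux

open CategoryTheory Limits

variable {R : Type u} [Ring R]

variable {K F M : ModuleCat.{u} R} (P : CategoryTheory.ProjectiveResolution K)
  (f : K ⟶ F) (g : F ⟶ M)

section
variable [Projective F] (hf : Function.Injective f) (hg : Function.Surjective g)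
  (hfg : Function.Exact f g)

/-- The augmentation map of a projective resolution, as a map to `K` itself. -/
def π₀ : P.complex.X 0 ⟶ K := ((ChainComplex.toSingle₀Equiv P.complex K) P.π).1

lemma hπ₀ : P.complex.d 1 0 ≫ π₀ P = 0 := ((ChainComplex.toSingle₀Equiv P.complex K) P.π).2

lemma π₀_surj : Function.Surjective (π₀ P) := by
  have : (π₀ P) = P.π.f 0 := rfl
  rw [this]
  exact (ModuleCat.epi_iff_surjective (P.π.f 0)).1 inferInstance

lemma π₀_exact : ∀ x : P.complex.X 0, π₀ P x = 0 → ∃ y, P.complex.d 1 0 y = x := by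
  have := P.exact₀
  rw [ShortComplex.moduleCat_exact_iff] at this
  intro x hx
  exact this x hx

include hfg in
lemma w : f ≫ g = 0 := by
  ext x
  simpa using hfg.apply_apply_eq_zero x

/-- The extended complex resolving `M`. -/
def Qc : ChainComplex (ModuleCat.{u} R) ℕ :=
  ChainComplex.of (fun n => Nat.casesOn n F (fun m => P.complex.X m))
    (fun n => Nat.casesOn n (π₀ P ≫ f) (fun m => P.complex.d (m + 1) m))
    (by
      rintro (_ | n)
      · dsimp
        rw [← Category.assoc, hπ₀, zero_comp]
      · exact P.complex.d_comp_d _ _ _)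

lemma Qc_d_one_zero : (Qc P f).d 1 0 = π₀ P ≫ f := by simp [Qc]; exact ChainComplex.of_d _ _ 0

lemma Qc_d_succ (n : ℕ) : (Qc P f).d (n + 2) (n + 1) = P.complex.d (n + 1) n :=
  ChainComplex.of_d _ _ (n + 1)

include hfg in
lemma sc0_exact : (ShortComplex.mk (π₀ P ≫ f) g (by
    rw [Category.assoc, w f g hfg, comp_zero])).Exact := by
  rw [ShortComplex.moduleCat_exact_iff]
  intro x hx
  obtain ⟨k, hk⟩ := (hfg x).mp hx
  obtain ⟨y, hy⟩ := π₀_surj P k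
  exact ⟨y, by simp [hy, hk]⟩

include hf in
lemma Qc_exactAt (n : ℕ) : (Qc P f).ExactAt (n + 1) := by
  rw [HomologicalComplex.exactAt_iff' _ (n + 2) (n + 1) n (by simp) (by simp)]
  rw [ShortComplex.moduleCat_exact_iff]
  intro x hx
  dsimp [HomologicalComplex.sc', HomologicalComplex.shortComplexFunctor'] at x hx ⊢
  cases n with
  | zero =>
    rw [Qc_d_one_zero] at hx
    have hx0 : π₀ P x = 0 := by
      apply hf
      rw [map_zero]; exact hx
    obtain ⟨y, hy⟩ := π₀_exact P x hx0
    refine ⟨y, ?_⟩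
    rw [Qc_d_succ]
    exact hy
  | succ m =>
    have := P.exact_succ m
    rw [ShortComplex.moduleCat_exact_iff] at this
    obtain ⟨y, hy⟩ := this x (by rw [Qc_d_succ] at hx; exact hx)
    refine ⟨y, ?_⟩
    rw [Qc_d_succ]
    exact hy

/-- The extended projective resolution of `M`. -/
def Qres : CategoryTheory.ProjectiveResolution M where
  complex := Qc P f
  projective := by rintro (_ | n) <;> dsimp [Qc] <;> infer_instance
  π := (ChainComplex.toSingle₀Equiv _ _).symm ⟨g, by
        rw [Qc_d_one_zero]; erw [Category.assoc, w f g hfg, Limits.comp_zero]⟩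
  quasiIso := ⟨fun n => by
    cases n with
    | zero =>
      rw [ChainComplex.quasiIsoAt₀_iff, ShortComplex.quasiIso_iff_of_zeros']
      · refine (ShortComplex.exact_and_epi_g_iff_of_iso ?_).2
          ⟨sc0_exact P f g hfg, (ModuleCat.epi_iff_surjective g).2 hg⟩
        refine ShortComplex.isoMk (Iso.refl _) (Iso.refl _) (Iso.refl _) ?_ ?_
        · dsimp
          exact (Category.id_comp _).trans ((Qc_d_one_zero P f).symm.trans (Category.comp_id _).symm)
        · dsimp
          rfl
      all_goals rfl
    | succ n =>
      rw [quasiIsoAt_iff_exactAt']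
      · exact Qc_exactAt P f hf n
      · apply ChainComplex.exactAt_succ_single_obj⟩

/-- Comparison of homologies of the Hom complexes. -/
def homShiftIso (Y : ModuleCat.{u} R) (n : ℕ) :
    (((Qc P f).linearYonedaObj ℤ Y).homology (n + 2)) ≅
      ((P.complex.linearYonedaObj ℤ Y).homology (n + 1)) := by
  refine (HomologicalComplex.homologyIsoSc' _ (n+1) (n+2) (n+3) (by simp) (by simp)) ≪≫
    ShortComplex.homologyMapIso ?_ ≪≫
    (HomologicalComplex.homologyIsoSc' _ n (n+1) (n+2) (by simp) (by simp)).symm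
  refine ShortComplex.isoMk (Iso.refl _) (Iso.refl _) (Iso.refl _) ?_ ?_
  · dsimp
    ext φ
    dsimp [HomologicalComplex.sc', HomologicalComplex.shortComplexFunctor']
    simp
    rw [Qc_d_succ]
    rfl
  · dsimp
    ext φ
    dsimp [HomologicalComplex.sc', HomologicalComplex.shortComplexFunctor']
    simp
    rw [Qc_d_succ]
    rfl

/-- The dimension-shifting isomorphism of Ext groups. -/
def extShiftIso (Y : ModuleCat.{u} R) (n : ℕ) :
    ((Ext ℤ (ModuleCat.{u} R) (n + 2)).obj (Opposite.op M)).obj Y ≅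
      ((Ext ℤ (ModuleCat.{u} R) (n + 1)).obj (Opposite.op K)).obj Y :=
  (Qres P f g hf hg hfg).isoExt (n + 2) Y ≪≫ homShiftIso P f Y n ≪≫
    (P.isoExt (n + 1) Y).symm

end

lemma subsingleton_of_iso {X Y : ModuleCat.{u} ℤ} (e : X ≅ Y) (h : Subsingleton X) :
    Subsingleton Y := by
  haveI := h
  exact ((forget (ModuleCat.{u} ℤ)).mapIso e).toEquiv.symm.subsingleton

lemma extZero_of_projective (F Y : ModuleCat.{u} R) (hF : Projective F) (n : ℕ) :
    ExtZero (n + 1) F Y := by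
  haveI := hF
  have h := isZero_Ext_succ_of_projective (R := ℤ) F Y n
  rw [IsZero.iff_id_eq_zero] at h
  refine ⟨fun x y => ?_⟩
  have hx : ∀ z : ((Ext ℤ (ModuleCat.{u} R) (n + 1)).obj (Opposite.op F)).obj Y, z = 0 := by
    intro z
    calc z = (𝟙 (((Ext ℤ (ModuleCat.{u} R) (n + 1)).obj (Opposite.op F)).obj Y)) z := rfl
    _ = 0 := by rw [h]; rfl
  rw [hx x, hx y]

lemma exists_proj_ses (M : ModuleCat.{u} R) :
    ∃ K F : ModuleCat.{u} R, Projective F ∧ IsSES K F M := by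
  let g₀ : (↥M →₀ R) →ₗ[R] ↥M := Finsupp.linearCombination R id
  refine ⟨ModuleCat.of R (LinearMap.ker g₀), ModuleCat.of R (↥M →₀ R),
    ModuleCat.projective_of_free Finsupp.basisSingleOne,
    ModuleCat.ofHom (LinearMap.ker g₀).subtype, ModuleCat.ofHom g₀,
    Submodule.injective_subtype _, Finsupp.linearCombination_id_surjective R ↥M, ?_⟩
  intro y
  constructor
  · intro h
    exact ⟨⟨y, h⟩, rfl⟩
  · rintro ⟨x, rfl⟩
    exact x.2

end DimShiftAux

theorem stmt16 {R : Type u} [Ring R] (A B : ModuleCat.{u} R → Prop)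
    (hA : ∀ M : ModuleCat.{u} R, A M ↔ ∀ b, B b → ExtZero 1 M b)
    (hB : ∀ M : ModuleCat.{u} R, B M ↔ ∀ a, A a → ExtZero 1 a M)
    (hdim : DefinesHomDim A) :
    ∀ i, 1 ≤ i → ∀ a b, A a → B b → ExtZero i a b := by
  have hproj : ∀ F : ModuleCat.{u} R, Projective F → A F := by
    intro F hF
    exact (hA F).2 (fun b _ => extZero_of_projective F b hF 0)
  have key : ∀ n : ℕ, ∀ a b, A a → B b → ExtZero (n + 1) a b := by
    intro n
    induction n with
    | zero =>
      intro a b ha hb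
      exact (hA a).1 ha b hb
    | succ n ih =>
      intro a b ha hb
      obtain ⟨K, F, hF, hKFa⟩ := exists_proj_ses a
      have hKA : A K := by
        refine hdim.2 0 K a ?_ ⟨F, hproj F hF, hKFa⟩
        refine ⟨ModuleCat.of R PUnit, a, Or.inl ha, ⟨0, 𝟙 a, ?_, ?_, ?_⟩, Or.inr ?_⟩
        · intro x y _
          exact Subsingleton.elim x y
        · intro y
          exact ⟨y, rfl⟩
        · intro y
          constructor
          · intro h
            refine ⟨0, ?_⟩
            simpa using h.symm
          · rintro ⟨x, rfl⟩
            simp only [ModuleCat.id_apply]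
            rfl
        · infer_instance
      obtain ⟨f, g, hf, hg, hfg⟩ := hKFa
      haveI := hF
      have e := extShiftIso (ProjectiveResolution.of K) f g hf hg hfg b n
      exact subsingleton_of_iso e.symm (ih K b hKA hb)
  intro i hi a b ha hb
  obtain ⟨n, rfl⟩ : ∃ n, i = n + 1 := ⟨i - 1, (Nat.succ_pred_eq_of_pos hi).symm⟩
  exact key n a b ha hb
end
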